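/- Let β > 0, c := 1/(9β), and let ũ : ℝ × ℝ → ℝ be three times continuously differentiable. Define u(t,x) := φ_c(x + ct) + √β · ũ(t, x + t/(3β)). Then u satisfies the defocusing mKdV equation u_t + (u_{xx} − u³)_x = 0 at every point of ℝ × ℝ if and only if ũ = ũ(t,y) satisfies the perturbed Gardner equation ũ_t + (ũ_{yy} + ũ² − β·ũ³)_y = 3·[(φ_c² − c)·ũ + √β·(φ_c + √c)·ũ²]_y at every point, where in the last equation φ_c is evaluated at y − 2ct. -/

import Mathlib

/-- The mKdV kink profile `φ_c(s) = √c · tanh(√c · s / √2)`. -/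
noncomputable def kink (c : ℝ) (s : ℝ) : ℝ :=
  Real.sqrt c * Real.tanh (Real.sqrt c * s / Real.sqrt 2)

/-- `u` solves the defocusing mKdV equation `u_t + (u_{xx} - u³)_x = 0`
pointwise on ℝ × ℝ (first variable is time, second is space). -/
def IsMKdVSolution (u : ℝ → ℝ → ℝ) : Prop :=
  ∀ t x : ℝ,
    deriv (fun τ => u τ x) t
      + deriv (fun ξ => deriv (deriv (u t)) ξ - (u t ξ) ^ 3) x = 0

/-- First derivative of the kink. -/
noncomputable def kink1 (c : ℝ) (s : ℝ) : ℝ :=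
  Real.sqrt c * (Real.sqrt c / Real.sqrt 2) / Real.cosh (Real.sqrt c * s / Real.sqrt 2) ^ 2

/-- Second derivative of the kink. -/
noncomputable def kink2 (c : ℝ) (s : ℝ) : ℝ :=
  -2 * Real.sqrt c * (Real.sqrt c / Real.sqrt 2) ^ 2 * Real.sinh (Real.sqrt c * s / Real.sqrt 2)
    / Real.cosh (Real.sqrt c * s / Real.sqrt 2) ^ 3

lemma HasDerivAt.congr_d {f : ℝ → ℝ} {a b x : ℝ} (h : HasDerivAt f a x) (hab : a = b) :
    HasDerivAt f b x := hab ▸ h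

lemma tanh_hasDerivAt (x : ℝ) : HasDerivAt Real.tanh (1 / Real.cosh x ^ 2) x := by
  have h := (Real.hasDerivAt_sinh x).div (Real.hasDerivAt_cosh x) (ne_of_gt (Real.cosh_pos x))
  have hT : Real.tanh = fun z => Real.sinh z / Real.cosh z := funext Real.tanh_eq_sinh_div_cosh
  rw [hT]
  refine HasDerivAt.congr_d h ?_
  have hid : Real.cosh x ^ 2 - Real.sinh x ^ 2 = 1 := Real.cosh_sq_sub_sinh_sq x
  rw [← hid]
  ring

lemma kink_hasDerivAt (c s : ℝ) : HasDerivAt (kink c) (kink1 c s) s := by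
  have hin : HasDerivAt (fun z : ℝ => Real.sqrt c * z / Real.sqrt 2)
      (Real.sqrt c / Real.sqrt 2) s := by
    have := ((hasDerivAt_id s).const_mul (Real.sqrt c)).div_const (Real.sqrt 2)
    simpa using this
  have h := ((tanh_hasDerivAt (Real.sqrt c * s / Real.sqrt 2)).comp s hin).const_mul
    (Real.sqrt c)
  unfold kink kink1
  refine HasDerivAt.congr_d h ?_
  ring

lemma kink1_hasDerivAt (c s : ℝ) : HasDerivAt (kink1 c) (kink2 c s) s := by
  have hin : HasDerivAt (fun z : ℝ => Real.sqrt c * z / Real.sqrt 2)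
      (Real.sqrt c / Real.sqrt 2) s := by
    have := ((hasDerivAt_id s).const_mul (Real.sqrt c)).div_const (Real.sqrt 2)
    simpa using this
  have hcosh : HasDerivAt (fun z : ℝ => Real.cosh (Real.sqrt c * z / Real.sqrt 2))
      (Real.sinh (Real.sqrt c * s / Real.sqrt 2) * (Real.sqrt c / Real.sqrt 2)) s :=
    (Real.hasDerivAt_cosh _).comp s hin
  have hpow := hcosh.pow 2
  have hne : Real.cosh (Real.sqrt c * s / Real.sqrt 2) ^ 2 ≠ 0 :=
    pow_ne_zero 2 (ne_of_gt (Real.cosh_pos _))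
  have h := (hasDerivAt_const s (Real.sqrt c * (Real.sqrt c / Real.sqrt 2))).div hpow hne
  unfold kink1 kink2
  refine HasDerivAt.congr_d h ?_
  have hcpos : (0:ℝ) < Real.cosh (Real.sqrt c * s / Real.sqrt 2) := Real.cosh_pos _
  simp only [Pi.pow_apply]
  field_simp
  ring

lemma kink_ode (c : ℝ) (hc : 0 ≤ c) (s : ℝ) :
    kink2 c s = (kink c s) ^ 3 - c * kink c s := by
  unfold kink kink2
  set a := Real.sqrt c * s / Real.sqrt 2
  have hsc : Real.sqrt c ^ 2 = c := Real.sq_sqrt hc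
  have h2 : (Real.sqrt 2 : ℝ) ^ 2 = 2 := Real.sq_sqrt (by norm_num)
  have h2ne : (Real.sqrt 2 : ℝ) ≠ 0 := by positivity
  have hcne : Real.cosh a ≠ 0 := ne_of_gt (Real.cosh_pos _)
  have hid : Real.cosh a ^ 2 - Real.sinh a ^ 2 = 1 := Real.cosh_sq_sub_sinh_sq a
  have htanh : Real.tanh a = Real.sinh a / Real.cosh a := Real.tanh_eq_sinh_div_cosh a
  rw [htanh, div_pow, h2]
  field_simp
  linear_combination (c * Real.sqrt c * Real.sinh a) * hid
    + (-Real.sqrt c * (Real.sinh a + Real.sinh a ^ 3)) * hsc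

theorem stmt11 (β : ℝ) (hβ : 0 < β) (c : ℝ) (hc : c = 1 / (9 * β))
    (v : ℝ → ℝ → ℝ) (hv : ContDiff ℝ 3 (Function.uncurry v)) :
    IsMKdVSolution
        (fun t x => kink c (x + c * t) + Real.sqrt β * v t (x + t / (3 * β)))
      ↔ (∀ t y : ℝ,
        deriv (fun τ => v τ y) t
          + deriv (fun η => deriv (deriv (v t)) η + (v t η) ^ 2 - β * (v t η) ^ 3) y
        = 3 * deriv (fun η =>
            ((kink c (η - 2 * c * t)) ^ 2 - c) * v t η
              + Real.sqrt β * (kink c (η - 2 * c * t) + Real.sqrt c) * (v t η) ^ 2) y) := by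
  have hβne : β ≠ 0 := ne_of_gt hβ
  have hcpos : 0 < c := by rw [hc]; positivity
  set sb := Real.sqrt β with hsb
  set sc := Real.sqrt c with hscdef
  have hsbne : sb ≠ 0 := by positivity
  have hsb2 : sb ^ 2 = β := Real.sq_sqrt hβ.le
  have hsc2 : sc ^ 2 = c := Real.sq_sqrt hcpos.le
  have hsbsc : sb * sc = 1 / 3 := by
    rw [hsb, hscdef, ← Real.sqrt_mul hβ.le]
    rw [show β * c = (1/3)^2 by rw [hc]; field_simp; ring]
    exact Real.sqrt_sq (by norm_num)
  have hdiv : ∀ τ : ℝ, τ / (3 * β) = 3 * c * τ := by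
    intro τ; rw [hc]; field_simp; ring
  have hFd : Differentiable ℝ (Function.uncurry v) :=
    hv.differentiable (by norm_num)
  have shift : ∀ (f f' : ℝ → ℝ), (∀ p, HasDerivAt f (f' p) p) →
      ∀ (d z : ℝ), HasDerivAt (fun w => f (w + d)) (f' (z + d)) z := by
    intro f f' hf d z
    simpa [Function.comp_def] using (hf (z + d)).comp z ((hasDerivAt_id z).add_const d)
  have shiftS : ∀ (f f' : ℝ → ℝ), (∀ p, HasDerivAt f (f' p) p) →
      ∀ (d z : ℝ), HasDerivAt (fun w => f (w - d)) (f' (z - d)) z := by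
    intro f f' hf d z
    simpa [Function.comp_def] using (hf (z - d)).comp z ((hasDerivAt_id z).sub_const d)
  -- the key pointwise identity
  have key : ∀ t x : ℝ,
      deriv (fun τ => kink c (x + c * τ) + sb * v τ (x + 3 * c * τ)) t
        + deriv (fun ξ =>
            deriv (deriv (fun x' => kink c (x' + c * t) + sb * v t (x' + 3 * c * t))) ξ
              - (kink c (ξ + c * t) + sb * v t (ξ + 3 * c * t)) ^ 3) x
      = sb * ((deriv (fun τ => v τ (x + 3 * c * t)) t
          + deriv (fun η => deriv (deriv (v t)) η + (v t η) ^ 2 - β * (v t η) ^ 3)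
              (x + 3 * c * t))
        - 3 * deriv (fun η =>
            ((kink c (η - 2 * c * t)) ^ 2 - c) * v t η
              + sb * (kink c (η - 2 * c * t) + sc) * (v t η) ^ 2) (x + 3 * c * t)) := by
    intro t x
    have hvt : ContDiff ℝ 3 (v t) :=
      hv.comp (contDiff_const.prodMk contDiff_id)
    set g : ℝ → ℝ := v t with hg
    set g1 : ℝ → ℝ := deriv g with hg1
    set g2 : ℝ → ℝ := deriv g1 with hg2
    set g3 : ℝ → ℝ := deriv g2 with hg3
    have hvt' : ContDiff ℝ (2+1) g := by norm_num; exact hvt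
    have hgd : Differentiable ℝ g := (contDiff_succ_iff_deriv.mp hvt').1
    have hg1c : ContDiff ℝ 2 g1 := (contDiff_succ_iff_deriv.mp hvt').2.2
    have hg1c' : ContDiff ℝ (1+1) g1 := by norm_num; exact hg1c
    have hg1d : Differentiable ℝ g1 := (contDiff_succ_iff_deriv.mp hg1c').1
    have hg2c : ContDiff ℝ 1 g2 := (contDiff_succ_iff_deriv.mp hg1c').2.2
    have hg2d : Differentiable ℝ g2 := hg2c.differentiable (by norm_num)
    have hgHD : ∀ p, HasDerivAt g (g1 p) p := fun p => (hgd p).hasDerivAt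
    have hg1HD : ∀ p, HasDerivAt g1 (g2 p) p := fun p => (hg1d p).hasDerivAt
    have hg2HD : ∀ p, HasDerivAt g2 (g3 p) p := fun p => (hg2d p).hasDerivAt
    -- spatial derivatives of u t
    have hu1 : deriv (fun x' => kink c (x' + c * t) + sb * g (x' + 3 * c * t))
        = fun z => kink1 c (z + c * t) + sb * g1 (z + 3 * c * t) := by
      funext z
      exact ((shift (kink c) (kink1 c) (kink_hasDerivAt c) (c*t) z).add
        ((shift g g1 hgHD (3*c*t) z).const_mul sb)).deriv
    have hu2 : deriv (deriv (fun x' => kink c (x' + c * t) + sb * g (x' + 3 * c * t)))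
        = fun z => kink2 c (z + c * t) + sb * g2 (z + 3 * c * t) := by
      rw [hu1]
      funext z
      exact ((shift (kink1 c) (kink2 c) (kink1_hasDerivAt c) (c*t) z).add
        ((shift g1 g2 hg1HD (3*c*t) z).const_mul sb)).deriv
    -- time derivative pieces
    have hkt : HasDerivAt (fun τ => kink c (x + c * τ)) (kink1 c (x + c * t) * c) t := by
      have hin : HasDerivAt (fun τ : ℝ => x + c * τ) c t := by
        simpa using ((hasDerivAt_id t).const_mul c).const_add x
      simpa [Function.comp_def] using (kink_hasDerivAt c (x + c * t)).comp t hin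
    set L := fderiv ℝ (Function.uncurry v) (t, x + 3 * c * t) with hL
    have hcurve : HasDerivAt (fun τ : ℝ => ((τ, x + 3 * c * τ) : ℝ × ℝ)) ((1, 3*c)) t := by
      have h1 : HasDerivAt (fun τ : ℝ => τ) (1:ℝ) t := hasDerivAt_id t
      have h2 : HasDerivAt (fun τ : ℝ => x + 3 * c * τ) (3*c) t := by
        simpa using ((hasDerivAt_id t).const_mul (3*c)).const_add x
      exact h1.prodMk h2
    have hvtime : HasDerivAt (fun τ => v τ (x + 3 * c * τ)) (L (1, 3*c)) t := by
      exact (hFd (t, x + 3 * c * t)).hasFDerivAt.comp_hasDerivAt t hcurve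
    have hVT : HasDerivAt (fun τ => v τ (x + 3 * c * t)) (L (1, 0)) t := by
      have hcv : HasDerivAt (fun τ : ℝ => ((τ, x + 3 * c * t) : ℝ × ℝ)) ((1, 0)) t :=
        (hasDerivAt_id t).prodMk (hasDerivAt_const t (x + 3 * c * t))
      exact (hFd (t, x + 3 * c * t)).hasFDerivAt.comp_hasDerivAt t hcv
    have hVY : HasDerivAt g (L (0, 1)) (x + 3 * c * t) := by
      have hcv : HasDerivAt (fun η : ℝ => ((t, η) : ℝ × ℝ)) ((0, 1)) (x + 3 * c * t) :=
        (hasDerivAt_const _ t).prodMk (hasDerivAt_id _)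
      exact (hFd (t, x + 3 * c * t)).hasFDerivAt.comp_hasDerivAt _ hcv
    have hLlin : L (1, 3*c) = L (1, 0) + 3 * c * L (0, 1) := by
      have hv' : ((1:ℝ), (3*c:ℝ)) = (1, 0) + (3*c) • ((0:ℝ), (1:ℝ)) := by
        simp [Prod.ext_iff]
      rw [hv', map_add, map_smul]
      simp [smul_eq_mul]
    have hg1y : g1 (x + 3 * c * t) = L (0, 1) := hVY.deriv
    -- compute the time derivative of u
    have htime : deriv (fun τ => kink c (x + c * τ) + sb * v τ (x + 3 * c * τ)) t
        = kink1 c (x + c * t) * c + sb * (L (1, 0) + 3 * c * g1 (x + 3 * c * t)) := by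
      have h : deriv (fun τ => kink c (x + c * τ) + sb * v τ (x + 3 * c * τ)) t = _ :=
        (hkt.add (hvtime.const_mul sb)).deriv
      rw [h, hLlin, hg1y]
    -- the spatial derivative term
    have hspace : deriv (fun ξ =>
        deriv (deriv (fun x' => kink c (x' + c * t) + sb * g (x' + 3 * c * t))) ξ
          - (kink c (ξ + c * t) + sb * g (ξ + 3 * c * t)) ^ 3) x
        = (3 * kink c (x + c * t) ^ 2 * kink1 c (x + c * t)
            - c * kink1 c (x + c * t) + sb * g3 (x + 3 * c * t))
          - 3 * (kink c (x + c * t) + sb * g (x + 3 * c * t)) ^ 2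
            * (kink1 c (x + c * t) + sb * g1 (x + 3 * c * t)) := by
      simp only [hu2]
      have hode : ∀ z : ℝ, kink2 c (z + c * t) + sb * g2 (z + 3 * c * t)
          = kink c (z + c * t) ^ 3 - c * kink c (z + c * t) + sb * g2 (z + 3 * c * t) := by
        intro z; rw [kink_ode c hcpos.le]
      simp only [hode]
      have K := shift (kink c) (kink1 c) (kink_hasDerivAt c) (c*t) x
      have G := shift g g1 hgHD (3*c*t) x
      have G3 := shift g2 g3 hg2HD (3*c*t) x
      have h : HasDerivAt (fun ξ => kink c (ξ + c * t) ^ 3 - c * kink c (ξ + c * t)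
            + sb * g2 (ξ + 3 * c * t)
            - (kink c (ξ + c * t) + sb * g (ξ + 3 * c * t)) ^ 3)
          ((3 * kink c (x + c * t) ^ 2 * kink1 c (x + c * t)
            - c * kink1 c (x + c * t) + sb * g3 (x + 3 * c * t))
          - 3 * (kink c (x + c * t) + sb * g (x + 3 * c * t)) ^ 2
            * (kink1 c (x + c * t) + sb * g1 (x + 3 * c * t))) x := by
        exact HasDerivAt.congr_d
          ((((K.pow 3).sub (K.const_mul c)).add (G3.const_mul sb)).sub
            ((K.add (G.const_mul sb)).pow 3)) (by simp only [Pi.pow_apply, Pi.sub_apply, Pi.mul_apply, Pi.add_apply]; push_cast; ring)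
      exact h.deriv
    -- Gardner derivatives
    have hGB : deriv (fun η => g2 η + g η ^ 2 - β * g η ^ 3) (x + 3 * c * t)
        = g3 (x + 3 * c * t)
          + 2 * g (x + 3 * c * t) * g1 (x + 3 * c * t)
          - β * (3 * g (x + 3 * c * t) ^ 2 * g1 (x + 3 * c * t)) := by
      have h : HasDerivAt (fun η => g2 η + g η ^ 2 - β * g η ^ 3)
          (g3 (x + 3 * c * t)
            + 2 * g (x + 3 * c * t) * g1 (x + 3 * c * t)
            - β * (3 * g (x + 3 * c * t) ^ 2 * g1 (x + 3 * c * t))) (x + 3 * c * t) := by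
        exact HasDerivAt.congr_d
          (((hg2HD _).add ((hgHD _).pow 2)).sub (((hgHD _).pow 3).const_mul β))
          (by push_cast; ring)
      exact h.deriv
    have hGC : deriv (fun η =>
        ((kink c (η - 2 * c * t)) ^ 2 - c) * g η
          + sb * (kink c (η - 2 * c * t) + sc) * g η ^ 2) (x + 3 * c * t)
        = (2 * kink c (x + c * t) * kink1 c (x + c * t)) * g (x + 3 * c * t)
          + (kink c (x + c * t) ^ 2 - c) * g1 (x + 3 * c * t)
          + sb * kink1 c (x + c * t) * g (x + 3 * c * t) ^ 2
          + sb * (kink c (x + c * t) + sc) * (2 * g (x + 3 * c * t) * g1 (x + 3 * c * t)) := by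
      have hys : (x + 3 * c * t) - 2 * c * t = x + c * t := by ring
      have K := shiftS (kink c) (kink1 c) (kink_hasDerivAt c) (2*c*t) (x + 3 * c * t)
      rw [hys] at K
      have heq : (fun η =>
          ((kink c (η - 2 * c * t)) ^ 2 - c) * g η
            + sb * (kink c (η - 2 * c * t) + sc) * g η ^ 2)
          = fun η => ((kink c (η - 2 * c * t)) ^ 2 - c) * g η
            + (sb * kink c (η - 2 * c * t) + sb * sc) * g η ^ 2 := by
        funext η; ring
      rw [heq]
      have h : HasDerivAt (fun η =>
          ((kink c (η - 2 * c * t)) ^ 2 - c) * g η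
            + (sb * kink c (η - 2 * c * t) + sb * sc) * g η ^ 2)
          ((2 * kink c (x + c * t) * kink1 c (x + c * t)) * g (x + 3 * c * t)
            + (kink c (x + c * t) ^ 2 - c) * g1 (x + 3 * c * t)
            + sb * kink1 c (x + c * t) * g (x + 3 * c * t) ^ 2
            + sb * (kink c (x + c * t) + sc)
              * (2 * g (x + 3 * c * t) * g1 (x + 3 * c * t))) (x + 3 * c * t) := by
        exact HasDerivAt.congr_d
          ((((K.pow 2).sub_const c).mul (hgHD _)).add
            (((K.const_mul sb).add_const (sb * sc)).mul ((hgHD _).pow 2)))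
          (by simp only [Pi.pow_apply, Pi.sub_apply, Pi.mul_apply, Pi.add_apply, hys]; push_cast; ring)
      exact h.deriv
    -- put everything together
    rw [htime, hspace, hVT.deriv, hGB, hGC]
    linear_combination (-3 * sb * g (x + 3 * c * t) ^ 2 * g1 (x + 3 * c * t)) * hsb2
      + (6 * sb * g (x + 3 * c * t) * g1 (x + 3 * c * t)) * hsbsc
  -- conclude the equivalence
  unfold IsMKdVSolution
  simp only [hdiv]
  constructor
  · intro h t y
    have h2 := key t (y - 3 * c * t)
    have h3 := h t (y - 3 * c * t)
    rw [show y - 3 * c * t + 3 * c * t = y by ring] at h2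
    have h4 : sb * ((deriv (fun τ => v τ y) t
        + deriv (fun η => deriv (deriv (v t)) η + (v t η) ^ 2 - β * (v t η) ^ 3) y)
        - 3 * deriv (fun η => ((kink c (η - 2 * c * t)) ^ 2 - c) * v t η
            + sb * (kink c (η - 2 * c * t) + sc) * (v t η) ^ 2) y) = 0 := by
      rw [← h2]; exact h3
    have h5 := (mul_eq_zero.mp h4).resolve_left hsbne
    linarith [h5]
  · intro h t x
    have h3 := h t (x + 3 * c * t)
    rw [key t x, h3]
    ring
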